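/- Let S be a non-abelian finite simple group, n = μ(S) the smallest degree of a faithful transitive permutation representation of S, and A a group with S ≤ A ≤ Aut(S). If A has a faithful primitive permutation action on a finite set Ω such that S acts transitively but imprimitively on Ω, then |Ω| ≥ 3n. -/

import Mathlib

open MulAction Subgroup Set
open scoped Pointwise

section Aux

variable {G : Type*} [Group G]

private lemma aux_exists_orderOf_ge_three [Finite G] (h : ¬ ∀ a b : G, a * b = b * a) :
    ∃ x : G, 3 ≤ orderOf x := by
  by_contra hc
  push_neg at hc
  apply h
  have hsq : ∀ x : G, x * x = 1 := by
    intro x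
    have h0 : orderOf x ≠ 0 := (orderOf_pos x).ne'
    have h3 : orderOf x < 3 := hc x
    have ho : orderOf x = 1 ∨ orderOf x = 2 := by omega
    rcases ho with ho | ho
    · rw [orderOf_eq_one_iff.mp ho, mul_one]
    · have := pow_orderOf_eq_one x
      rwa [ho, pow_two] at this
  intro a b
  have hinv : ∀ x : G, x⁻¹ = x := fun x => inv_eq_of_mul_eq_one_right (hsq x)
  have h1 := hinv (a * b)
  rw [mul_inv_rev, hinv a, hinv b] at h1
  exact h1.symm

private lemma aux_index_ge [Finite G] [IsSimpleGroup G] {n : ℕ}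
    (hn : IsLeast {m : ℕ | ∃ H : Subgroup G, H.normalCore = ⊥ ∧ H.index = m ∧ 0 < m} n)
    {H : Subgroup G} (hH : H ≠ ⊤) : n ≤ H.index := by
  have hc : H.normalCore = ⊥ := by
    rcases H.normalCore_normal.eq_bot_or_eq_top with h | h
    · exact h
    · exact absurd (top_le_iff.mp (h ▸ H.normalCore_le)) hH
  exact hn.2 ⟨H, hc, rfl, Nat.pos_of_ne_zero Subgroup.index_ne_zero_of_finite⟩

private lemma aux_three_mul_le_card [Finite G] [IsSimpleGroup G]
    (hnonab : ¬ ∀ a b : G, a * b = b * a) {n : ℕ}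
    (hn : IsLeast {m : ℕ | ∃ H : Subgroup G, H.normalCore = ⊥ ∧ H.index = m ∧ 0 < m} n) :
    3 * n ≤ Nat.card G := by
  obtain ⟨x, hx⟩ := aux_exists_orderOf_ge_three hnonab
  have hZ : Subgroup.zpowers x ≠ ⊤ := by
    intro h
    apply hnonab
    intro a b
    obtain ⟨i, hi⟩ := Subgroup.mem_zpowers_iff.mp (h ▸ Subgroup.mem_top a)
    obtain ⟨j, hj⟩ := Subgroup.mem_zpowers_iff.mp (h ▸ Subgroup.mem_top b)
    rw [← hi, ← hj, zpow_mul_comm]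
  have h1 : n ≤ (Subgroup.zpowers x).index := aux_index_ge hn hZ
  have h2 : (Subgroup.zpowers x).index * Nat.card (Subgroup.zpowers x) = Nat.card G :=
    Subgroup.index_mul_card _
  have h3 : Nat.card (Subgroup.zpowers x) = orderOf x := Nat.card_zpowers x
  calc 3 * n = n * 3 := Nat.mul_comm _ _
    _ ≤ (Subgroup.zpowers x).index * Nat.card (Subgroup.zpowers x) := by
        rw [h3]; exact Nat.mul_le_mul h1 hx
    _ = Nat.card G := h2

private lemma aux_block_bound {Ω : Type*} [Finite G] [Finite Ω] [IsSimpleGroup G] [MulAction G Ω]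
    [IsPretransitive G Ω] {n : ℕ}
    (hn : IsLeast {m : ℕ | ∃ H : Subgroup G, H.normalCore = ⊥ ∧ H.index = m ∧ 0 < m} n)
    {B : Set Ω} (hB : IsBlock G B) (hne : B.Nonempty) (hnu : B ≠ Set.univ) :
    n * B.ncard ≤ Nat.card Ω := by
  obtain ⟨x, hx⟩ := hne
  have htop : stabilizer G B ≠ ⊤ := by
    intro h
    apply hnu
    apply Set.eq_univ_of_forall
    intro y
    obtain ⟨g, rfl⟩ := exists_smul_eq G x y
    have hg : g • B = B := by
      have : g ∈ stabilizer G B := h ▸ Subgroup.mem_top g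
      exact this
    rw [← hg]
    exact Set.smul_mem_smul_set hx
  have hnle : n ≤ (stabilizer G B).index := aux_index_ge hn htop
  have hrel : B.ncard = (stabilizer G x).relIndex (stabilizer G B) :=
    hB.ncard_block_eq_relIndex hx
  have hmul : (stabilizer G x).relIndex (stabilizer G B) * (stabilizer G B).index
      = (stabilizer G x).index := Subgroup.relIndex_mul_index (hB.stabilizer_le hx)
  calc n * B.ncard ≤ (stabilizer G B).index * B.ncard := Nat.mul_le_mul_right _ hnle
    _ = Nat.card Ω := by
        rw [hrel, mul_comm, hmul, MulAction.index_stabilizer_of_transitive]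

end Aux

theorem stmt19 {A : Type*} [Group A] (S : Subgroup A) [S.Normal]
    (hsimple : IsSimpleGroup S) (hnonab : ¬ ∀ a b : S, a * b = b * a)
    (hcent : Subgroup.centralizer (S : Set A) = ⊥)
    (n : ℕ)
    (hn : IsLeast {m : ℕ | ∃ H : Subgroup S, H.normalCore = ⊥ ∧ H.index = m ∧ 0 < m} n)
    (Ω : Type*) [Finite Ω] [MulAction A Ω] [FaithfulSMul A Ω]
    (hAtrans : MulAction.IsPretransitive A Ω)
    (hAprim : ∀ B : Set Ω, MulAction.IsBlock A B → B.Subsingleton ∨ B = Set.univ)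
    (hStrans : MulAction.IsPretransitive S Ω)
    (hSimpr : ∃ B : Set Ω, MulAction.IsBlock S B ∧ 1 < B.ncard ∧ B.ncard < Nat.card Ω) :
    3 * n ≤ Nat.card Ω := by
  classical
  haveI := hsimple
  haveI : IsPretransitive S Ω := hStrans
  haveI : Finite A :=
    Finite.of_injective (MulAction.toPerm : A → Equiv.Perm Ω) MulAction.toPerm_injective
  obtain ⟨B, hB, hB1, hB2⟩ := hSimpr
  have hBne : B.Nonempty := Set.nonempty_of_ncard_ne_zero (by omega)
  have hBnu : B ≠ Set.univ := by
    intro h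
    rw [h, Set.ncard_univ] at hB2
    omega
  rcases le_or_gt 3 B.ncard with h3 | h3
  · -- large block case
    have := aux_block_bound hn hB hBne hBnu
    have : n * 3 ≤ n * B.ncard := Nat.mul_le_mul_left _ h3
    omega
  · -- block of size 2
    have hBcard : B.ncard = 2 := by omega
    -- B is not a block for A
    have hnotA : ¬ MulAction.IsBlock A B := by
      intro h
      rcases hAprim B h with h1 | h1
      · have : B.ncard ≤ 1 := by
          rcases h1.eq_empty_or_singleton with rfl | ⟨a, rfl⟩ <;> simp
        omega
      · exact hBnu h1
    rw [MulAction.isBlock_iff_disjoint_smul_of_ne] at hnotA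
    push_neg at hnotA
    obtain ⟨a, hane, hadisj⟩ := hnotA
    obtain ⟨x, hxC, hxB⟩ := Set.not_disjoint_iff_nonempty_inter.mp hadisj
    -- a • B is a block for S since S is normal
    have hCblock : MulAction.IsBlock S (a • B) := by
      rw [MulAction.isBlock_iff_smul_eq_or_disjoint]
      intro s
      have hmem : a⁻¹ * (s : A) * a ∈ S := by
        simpa using ‹S.Normal›.conj_mem (s : A) s.2 a⁻¹
      set s' : S := ⟨a⁻¹ * (s : A) * a, hmem⟩ with hs'
      have key : s • (a • B) = a • (s' • B) := by
        show (s : A) • (a • B) = a • ((s' : A) • B)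
        rw [smul_smul, smul_smul]
        congr 1
        show (s : A) * a = a * (a⁻¹ * (s : A) * a)
        group
      rcases hB.smul_eq_or_disjoint s' with h | h
      · left; rw [key, h]
      · right
        rw [key, Set.disjoint_iff_inter_eq_empty, ← Set.smul_set_inter,
          Set.disjoint_iff_inter_eq_empty.mp h, Set.smul_set_empty]
    have hCcard : (a • B).ncard = 2 := by rw [Set.ncard_smul_set]; exact hBcard
    -- stabilizers
    have hHK : stabilizer S B ≠ stabilizer S (a • B) := by
      intro h
      apply hane
      have h1 := hB.orbit_stabilizer_eq hxB
      have h2 := hCblock.orbit_stabilizer_eq hxC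
      rw [← h2, ← h, h1]
    -- every element of stabilizer S x fixes a 2-element block through x pointwise
    have keyfix : ∀ D : Set Ω, D.ncard = 2 → x ∈ D → ∀ t : S, t • D = D → t • x = x →
        ∀ y ∈ D, t • y = y := by
      intro D hD2 hxD t htD htx y hy
      have hty : t • y ∈ D := htD ▸ Set.smul_mem_smul_set hy
      obtain ⟨p, q, hpq, rfl⟩ := Set.ncard_eq_two.mp hD2
      simp only [Set.mem_insert_iff, Set.mem_singleton_iff] at hxD hy hty
      rcases hxD with rfl | rfl <;> rcases hy with rfl | rfl <;>
        [skip; rcases hty with h | h; rcases hty with h | h; skip] <;>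
        first
          | exact htx
          | exact h
          | (exact absurd (MulAction.injective t (h.trans htx.symm)) hpq)
          | (exact absurd (MulAction.injective t (h.trans htx.symm)) (Ne.symm hpq))
    -- conjugation stability
    have conj : ∀ D : Set Ω, D.ncard = 2 → x ∈ D → MulAction.IsBlock S D →
        ∀ s ∈ stabilizer S D, ∀ t ∈ stabilizer S x, s * t * s⁻¹ ∈ stabilizer S x := by
      intro D hD2 hxD hDb s hs t ht
      have hsx : s⁻¹ • x ∈ D := by
        have h1 : s⁻¹ • D = D := inv_mem hs
        rw [← h1]
        exact Set.smul_mem_smul_set hxD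
      have h2 : t • (s⁻¹ • x) = s⁻¹ • x :=
        keyfix D hD2 hxD t ((hDb.stabilizer_le hxD) ht) ht _ hsx
      show (s * t * s⁻¹) • x = x
      rw [mul_smul, mul_smul, h2, smul_inv_smul]
    have hnorm : ∀ D : Set Ω, D.ncard = 2 → x ∈ D → MulAction.IsBlock S D →
        stabilizer S D ≤ Subgroup.normalizer ((stabilizer S x : Subgroup S) : Set S) := by
      intro D hD2 hxD hDb s hs
      rw [Subgroup.mem_normalizer_iff]
      intro t
      constructor
      · intro ht
        exact conj D hD2 hxD hDb s hs t ht
      · intro ht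
        have := conj D hD2 hxD hDb s⁻¹ (inv_mem hs) _ ht
        have he : s⁻¹ * (s * t * s⁻¹) * s⁻¹⁻¹ = t := by group
        rwa [he] at this
    by_cases hJtop : stabilizer S B ⊔ stabilizer S (a • B) = ⊤
    · -- stabilizer of x is normal in S
      have h1 : Subgroup.normalizer ((stabilizer S x : Subgroup S) : Set S) = ⊤ :=
        top_le_iff.mp (hJtop ▸ sup_le (hnorm B hBcard hxB hB)
          (hnorm (a • B) hCcard hxC hCblock))
      have hno : (stabilizer S x).Normal := Subgroup.normalizer_eq_top_iff.mp h1
      rcases hno.eq_bot_or_eq_top with h2 | h2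
      · have h3 : Nat.card Ω = Nat.card S := by
          rw [← MulAction.index_stabilizer_of_transitive S x, h2, Subgroup.index_bot]
        rw [h3]
        exact aux_three_mul_le_card hnonab hn
      · exfalso
        have h3 : (1 : ℕ) = Nat.card Ω := by
          rw [← MulAction.index_stabilizer_of_transitive S x, h2, Subgroup.index_top]
        omega
    · -- J proper
      set J := stabilizer S B ⊔ stabilizer S (a • B) with hJ
      have hxH : stabilizer S x ≤ stabilizer S B := hB.stabilizer_le hxB
      have hxK : stabilizer S x ≤ stabilizer S (a • B) := hCblock.stabilizer_le hxC
      have hHle : stabilizer S B ≤ J := le_sup_left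
      have hKle : stabilizer S (a • B) ≤ J := le_sup_right
      have hnJ : n ≤ J.index := aux_index_ge hn hJtop
      have hrelB : (stabilizer S x).relIndex (stabilizer S B) = 2 :=
        (hB.ncard_block_eq_relIndex hxB).symm.trans hBcard
      have hrelC : (stabilizer S x).relIndex (stabilizer S (a • B)) = 2 :=
        (hCblock.ncard_block_eq_relIndex hxC).symm.trans hCcard
      have ht1 : (stabilizer S x).relIndex (stabilizer S B) * (stabilizer S B).relIndex J
          = (stabilizer S x).relIndex J :=
        Subgroup.relIndex_mul_relIndex _ _ _ hxH hHle
      have hHJ0 : (stabilizer S B).relIndex J ≠ 0 := by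
        rw [Subgroup.relIndex]
        exact Subgroup.index_ne_zero_of_finite
      have hrel3 : 3 ≤ (stabilizer S x).relIndex J := by
        by_contra hlt
        push_neg at hlt
        rw [hrelB] at ht1
        have h4 : (stabilizer S B).relIndex J = 1 := by omega
        have hJH : J ≤ stabilizer S B := Subgroup.relIndex_eq_one.mp h4
        have hKH : stabilizer S (a • B) ≤ stabilizer S B := hKle.trans hJH
        have ht2 : (stabilizer S x).relIndex (stabilizer S (a • B)) *
            (stabilizer S (a • B)).relIndex (stabilizer S B)
            = (stabilizer S x).relIndex (stabilizer S B) :=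
          Subgroup.relIndex_mul_relIndex _ _ _ hxK hKH
        rw [hrelB, hrelC] at ht2
        have h5 : (stabilizer S (a • B)).relIndex (stabilizer S B) = 1 := by omega
        exact hHK (le_antisymm (Subgroup.relIndex_eq_one.mp h5) hKH)
      have hmul : (stabilizer S x).relIndex J * J.index = (stabilizer S x).index :=
        Subgroup.relIndex_mul_index (hxH.trans hHle)
      have hcard : (stabilizer S x).index = Nat.card Ω :=
        MulAction.index_stabilizer_of_transitive S x
      have hfin := Nat.mul_le_mul hrel3 hnJ
      omega
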